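/- Let $p \in (0,1)$ and $t_0 > 0$. Define $c = \ln\frac{1-(1-p)e^{-t_0}}{p}$. Then $c > 0$, and for a random variable $V \geq 0$ with $P(V < t_0) = p$, one has $E[\exp(c\,\mathbf{1}_{\{V<t_0\}} - V)] \leq 1$. -/

import Mathlib

open MeasureTheory

/-- Let `p ∈ (0,1)`, `t₀ > 0` and `c = ln((1-(1-p)e^{-t₀})/p)`.  Then `c > 0`, and for a
nonnegative random variable `V` with `P(V < t₀) = p` one has
`E[exp(c·1_{V<t₀} - V)] ≤ 1`. -/
theorem stmt1 {Ω : Type*} {mΩ : MeasurableSpace Ω} (P : Measure Ω) [IsProbabilityMeasure P]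
    (V : Ω → ℝ) (hV : Measurable V) (hpos : ∀ᵐ ω ∂P, 0 ≤ V ω)
    (t₀ p : ℝ) (ht₀ : 0 < t₀) (hp0 : 0 < p) (hp1 : p < 1)
    (hp : P {ω | V ω < t₀} = ENNReal.ofReal p) :
    0 < Real.log ((1 - (1 - p) * Real.exp (-t₀)) / p) ∧
    ∫ ω, Real.exp (Real.log ((1 - (1 - p) * Real.exp (-t₀)) / p) *
      Set.indicator {ω | V ω < t₀} (fun _ => (1 : ℝ)) ω - V ω) ∂P ≤ 1 := by
  have hexp1 : Real.exp (-t₀) < 1 := by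
    rw [Real.exp_lt_one_iff]; linarith
  set q : ℝ := 1 - (1 - p) * Real.exp (-t₀) with hqdef
  have hpq : p < q := by
    have h1 : 0 < 1 - p := by linarith
    nlinarith [Real.exp_pos (-t₀)]
  have hq0 : 0 < q := lt_trans hp0 hpq
  set c : ℝ := Real.log (q / p) with hcdef
  have hc : 0 < c := Real.log_pos (by rw [lt_div_iff₀ hp0]; linarith)
  have hec : Real.exp c = q / p := Real.exp_log (div_pos hq0 hp0)
  set A : Set Ω := {ω | V ω < t₀} with hA
  have hAm : MeasurableSet A := measurableSet_lt hV measurable_const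
  refine ⟨hc, ?_⟩
  set f : Ω → ℝ := fun ω => Real.exp (c * A.indicator (fun _ => (1:ℝ)) ω - V ω) with hf
  set g : Ω → ℝ := A.indicator (fun _ => q / p) + Aᶜ.indicator (fun _ => Real.exp (-t₀))
    with hg
  have hfm : Measurable f := by
    apply Measurable.exp
    exact ((measurable_const.mul (measurable_const.indicator hAm)).sub hV)
  have hfg : ∀ᵐ ω ∂P, f ω ≤ g ω := by
    filter_upwards [hpos] with ω hω
    by_cases hωA : ω ∈ A
    · have h1 : g ω = q / p := by
        simp [hg, Set.indicator_of_mem hωA,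
          Set.indicator_of_notMem (by simpa using hωA : ω ∉ Aᶜ)]
      have h2 : f ω = Real.exp (c - V ω) := by
        simp [hf, Set.indicator_of_mem hωA]
      rw [h1, h2, ← hec]
      exact Real.exp_le_exp.2 (by linarith)
    · have hωA' : ω ∈ Aᶜ := hωA
      have ht : t₀ ≤ V ω := le_of_not_gt hωA
      have h1 : g ω = Real.exp (-t₀) := by
        simp [hg, Set.indicator_of_notMem hωA, Set.indicator_of_mem hωA']
      have h2 : f ω = Real.exp (-V ω) := by
        simp [hf, Set.indicator_of_notMem hωA]
      rw [h1, h2]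
      exact Real.exp_le_exp.2 (by linarith)
  have hfi : Integrable f P := by
    refine Integrable.mono' (integrable_const (Real.exp c)) hfm.aestronglyMeasurable ?_
    filter_upwards [hpos] with ω hω
    rw [Real.norm_eq_abs, abs_of_nonneg (Real.exp_pos _).le]
    apply Real.exp_le_exp.2
    by_cases hωA : ω ∈ A
    · simp [hf, Set.indicator_of_mem hωA]; linarith
    · simp [hf, Set.indicator_of_notMem hωA]; linarith
  have hgi : Integrable g P :=
    ((integrable_const _).indicator hAm).add ((integrable_const _).indicator hAm.compl)
  have hPA : (P A).toReal = p := by rw [hp, ENNReal.toReal_ofReal hp0.le]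
  have hPAc : (P Aᶜ).toReal = 1 - p := by
    rw [prob_compl_eq_one_sub hAm, hp]
    rw [ENNReal.toReal_sub_of_le (by simpa using hp1.le) ENNReal.one_ne_top]
    simp [ENNReal.toReal_ofReal hp0.le]
  have hgint : ∫ ω, g ω ∂P = 1 := by
    rw [hg]; simp only [Pi.add_apply]
    rw [integral_add ((integrable_const _).indicator hAm)
      ((integrable_const _).indicator hAm.compl)]
    rw [integral_indicator_const _ hAm, integral_indicator_const _ hAm.compl]
    change (P A).toReal • _ + (P Aᶜ).toReal • _ = 1
    rw [hPA, hPAc, smul_eq_mul, smul_eq_mul, mul_div_cancel₀ _ hp0.ne']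
    rw [hqdef]; ring
  calc ∫ ω, f ω ∂P ≤ ∫ ω, g ω ∂P := integral_mono_ae hfi hgi hfg
    _ = 1 := hgint
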